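/- Let L > 0 and ν > −π²/L². Then there exists α > 0 such that for every four times continuously differentiable v : [0, L] → ℝ with ∫₀^L v(x) dx = 0, v'(0) = v'(L) = 0 and v'''(0) = v'''(L) = 0, one has ∫₀^L v·(−v'''' + ν v'') dx ≤ −α ∫₀^L v² dx. -/

import Mathlib

open Real MeasureTheory Set intervalIntegral AddCircle Complex



lemma parseval_aux {T : ℝ} (hab : (0:ℝ) < T) (g : ℝ → ℂ) (hg : Continuous g) (hgT : g 0 = g T) :
    Summable (fun n : ℤ => ‖fourierCoeffOn hab g n‖ ^ 2) ∧
    ∑' n : ℤ, ‖fourierCoeffOn hab g n‖ ^ 2 = (1/T) * ∫ x in (0:ℝ)..T, ‖g x‖ ^ 2 := by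
  haveI : Fact (0 < T) := ⟨hab⟩
  set F : C(AddCircle T, ℂ) := ⟨AddCircle.liftIco T 0 g,
    AddCircle.liftIco_zero_continuous (by simpa using hgT) hg.continuousOn⟩ with hF
  set f2 := ContinuousMap.toLp (E := ℂ) 2 (@haarAddCircle T ⟨hab⟩) ℂ F with hf2
  have hcoeff : ∀ n : ℤ, fourierCoeff (f2 : AddCircle T → ℂ) n = fourierCoeffOn hab g n := by
    intro n
    rw [hf2, fourierCoeff_toLp]
    have := fourierCoeff_liftIco_eq (T := T) (a := 0) g n
    simpa [hF] using this
  have hsummable : Summable (fun n : ℤ => ‖fourierCoeffOn hab g n‖ ^ 2) := by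
    have h1 := (lp.memℓp (fourierBasis.repr f2)).summable (p := 2) (by norm_num)
    apply h1.congr
    intro n
    rw [fourierBasis_repr, hcoeff n, show ((2:ENNReal).toReal) = ((2:ℕ):ℝ) by norm_num,
      Real.rpow_natCast]
  refine ⟨hsummable, ?_⟩
  have hpars := tsum_sq_fourierCoeff f2
  simp_rw [hcoeff] at hpars
  have hmeq : (volume : Measure (AddCircle T)) = (ENNReal.ofReal T) • (@haarAddCircle T ⟨hab⟩) :=
    volume_eq_smul_haarAddCircle
  have h1 : ∫ t : AddCircle T, ‖(f2 : AddCircle T → ℂ) t‖ ^ 2 ∂(@haarAddCircle T ⟨hab⟩)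
      = ∫ t : AddCircle T, ‖F t‖ ^ 2 ∂(@haarAddCircle T ⟨hab⟩) := by
    apply MeasureTheory.integral_congr_ae
    filter_upwards [ContinuousMap.coeFn_toLp (p := 2) (@haarAddCircle T ⟨hab⟩) (𝕜 := ℂ) F] with t ht
    rw [hf2, ht]
  have h2 : ∫ t : AddCircle T, ‖F t‖ ^ 2 ∂(volume) = T * ∫ t : AddCircle T, ‖F t‖ ^ 2 ∂(@haarAddCircle T ⟨hab⟩) := by
    rw [hmeq, MeasureTheory.integral_smul_measure, ENNReal.toReal_ofReal hab.le]
    simp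
  have h3 : ∫ x in (0:ℝ)..(0+T), ‖F (x : AddCircle T)‖ ^ 2 = ∫ t : AddCircle T, ‖F t‖ ^ 2 ∂(volume) :=
    AddCircle.intervalIntegral_preimage T 0 (fun t => ‖F t‖^2)
  have h4 : ∫ x in (0:ℝ)..(0+T), ‖F (x : AddCircle T)‖ ^ 2 = ∫ x in (0:ℝ)..T, ‖g x‖ ^ 2 := by
    rw [zero_add, intervalIntegral.integral_of_le hab.le, intervalIntegral.integral_of_le hab.le,
      integral_Ioc_eq_integral_Ioo, integral_Ioc_eq_integral_Ioo]
    apply setIntegral_congr_fun measurableSet_Ioo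
    intro x hx
    simp only [hF, ContinuousMap.coe_mk]
    rw [AddCircle.liftIco_zero_coe_apply ⟨hx.1.le, hx.2⟩]
  rw [hpars, h1, ← h4, h3, h2]
  field_simp

noncomputable def evext (L : ℝ) (f : ℝ → ℝ) : ℝ → ℂ :=
  fun x => ((if x ≤ L then f x else f (2*L - x) : ℝ) : ℂ)

lemma evext_cont {L : ℝ} {f : ℝ → ℝ} (hf : Continuous f) : Continuous (evext L f) := by
  apply Continuous.comp Complex.continuous_ofReal
  apply Continuous.if_le hf (hf.comp (by continuity)) continuous_id continuous_const
  intro x hx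
  simp only [id] at hx
  rw [hx]
  show f L = f (2*L - L)
  rw [show 2*L - L = L by ring]

lemma evencoeff (L : ℝ) (hL : 0 < L) (f : ℝ → ℝ) (hf : Continuous f) (n : ℤ)
    (h2L : (0:ℝ) < 2*L) :
    fourierCoeffOn h2L (evext L f) n
      = (((∫ x in (0:ℝ)..L, f x * Real.cos (n * π / L * x)) / L : ℝ) : ℂ) := by
  rw [fourierCoeffOn_eq_integral]
  have hcont : ∀ m : ℤ, Continuous fun x : ℝ => (fourier m (x : AddCircle (2*L - 0))) • (evext L f x) :=
    fun m => ((map_continuous (fourier m)).comp (AddCircle.continuous_mk' _)).smul (evext_cont hf)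
  have hsplit : ∫ x in (0:ℝ)..(2*L), (fourier (-n) (x : AddCircle (2*L - 0))) • (evext L f x)
      = (∫ x in (0:ℝ)..L, (fourier (-n) (x : AddCircle (2*L - 0))) • (evext L f x))
        + ∫ x in L..(2*L), (fourier (-n) (x : AddCircle (2*L - 0))) • (evext L f x) :=
    (intervalIntegral.integral_add_adjacent_intervals
      ((hcont (-n)).intervalIntegrable _ _) ((hcont (-n)).intervalIntegrable _ _)).symm
  have hE : ∀ x : ℝ, (fourier (-n) ((x:ℝ) : AddCircle (2*L - 0)) : ℂ)
      + fourier (-n) (((2*L - x : ℝ)) : AddCircle (2*L - 0))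
      = ((2 * Real.cos ((n:ℝ)*π/L*x) : ℝ) : ℂ) := by
    intro x
    rw [fourier_coe_apply, fourier_coe_apply]
    have hLne : (L:ℂ) ≠ 0 := Complex.ofReal_ne_zero.mpr hL.ne'
    have e1 : 2 * (π:ℂ) * I * ((-n : ℤ):ℂ) * (x:ℝ) / ((2*L - 0 : ℝ):ℂ)
        = -(((n:ℝ)*π/L*x : ℝ) : ℂ) * I := by
      push_cast
      field_simp
      ring
    have e2 : 2 * (π:ℂ) * I * ((-n : ℤ):ℂ) * ((2*L - x : ℝ):ℂ) / ((2*L - 0 : ℝ):ℂ)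
        = (((n:ℝ)*π/L*x : ℝ):ℂ) * I + ((-n : ℤ) : ℂ) * (2*(π:ℂ)*I) := by
      push_cast
      field_simp
      ring
    rw [e1, e2, Complex.exp_add, Complex.exp_int_mul_two_pi_mul_I, mul_one, add_comm,
      ← Complex.two_cos]
    push_cast [Complex.ofReal_cos]
    ring
  have hI1 : ∫ x in (0:ℝ)..L, (fourier (-n) (x : AddCircle (2*L - 0))) • (evext L f x)
      = ∫ x in (0:ℝ)..L, (fourier (-n) (x : AddCircle (2*L - 0))) * (f x : ℂ) := by
    apply intervalIntegral.integral_congr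
    intro x hx
    rw [Set.uIcc_of_le hL.le] at hx
    simp only [evext, smul_eq_mul, if_pos hx.2]
  have hI2 : ∫ x in L..(2*L), (fourier (-n) (x : AddCircle (2*L - 0))) • (evext L f x)
      = ∫ x in L..(2*L), (fourier (-n) (x : AddCircle (2*L - 0))) * ((f (2*L - x) : ℝ) : ℂ) := by
    apply intervalIntegral.integral_congr
    intro x hx
    rw [Set.uIcc_of_le (by linarith : L ≤ 2*L)] at hx
    simp only [evext, smul_eq_mul]
    rcases le_or_gt x L with h | h
    · have hxL : x = L := le_antisymm h hx.1
      rw [if_pos h, hxL, show 2*L - L = L by ring]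
    · rw [if_neg (not_le.mpr h)]
  have hsub : ∫ x in L..(2*L), (fourier (-n) (x : AddCircle (2*L - 0))) * ((f (2*L - x) : ℝ) : ℂ)
      = ∫ x in (0:ℝ)..L, (fourier (-n) (((2*L - x : ℝ)) : AddCircle (2*L - 0))) * ((f x : ℝ) : ℂ) := by
    have h := intervalIntegral.integral_comp_sub_left (a := L) (b := 2*L)
      (fun u : ℝ => (fourier (-n) (((2*L - u : ℝ)) : AddCircle (2*L - 0))) * ((f u : ℝ) : ℂ)) (2*L)
    simp only [sub_sub_cancel] at h
    rw [show 2*L - 2*L = (0:ℝ) by ring, show 2*L - L = L by ring] at h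
    exact h
  have hint1 : IntervalIntegrable (fun x : ℝ => (fourier (-n) (x : AddCircle (2*L - 0))) * ((f x : ℝ) : ℂ))
      MeasureTheory.volume 0 L :=
    (((map_continuous (fourier (-n))).comp (AddCircle.continuous_mk' _)).mul
      (Complex.continuous_ofReal.comp hf)).intervalIntegrable _ _
  have hint2 : IntervalIntegrable
      (fun x : ℝ => (fourier (-n) (((2*L - x : ℝ)) : AddCircle (2*L - 0))) * ((f x : ℝ) : ℂ))
      MeasureTheory.volume 0 L :=
    (((map_continuous (fourier (-n))).comp ((AddCircle.continuous_mk' _).comp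
      (by continuity))).mul (Complex.continuous_ofReal.comp hf)).intervalIntegrable _ _
  have hcomb : (∫ x in (0:ℝ)..L, (fourier (-n) (x : AddCircle (2*L - 0))) * ((f x : ℝ) : ℂ))
      + (∫ x in (0:ℝ)..L, (fourier (-n) (((2*L - x : ℝ)) : AddCircle (2*L - 0))) * ((f x : ℝ) : ℂ))
      = ((∫ x in (0:ℝ)..L, 2 * (f x * Real.cos ((n:ℝ) * π / L * x)) : ℝ) : ℂ) := by
    rw [← intervalIntegral.integral_add hint1 hint2, ← intervalIntegral.integral_ofReal]
    apply intervalIntegral.integral_congr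
    intro x _
    simp only
    rw [← add_mul, hE x]
    push_cast
    ring
  rw [hsplit, hI1, hI2, hsub, hcomb, intervalIntegral.integral_const_mul]
  rw [Complex.real_smul, ← Complex.ofReal_mul]
  norm_cast
  field_simp
  ring

lemma even_parseval (L : ℝ) (hL : 0 < L) (f : ℝ → ℝ) (hf : Continuous f) :
    Summable (fun n : ℤ => ((∫ x in (0:ℝ)..L, f x * Real.cos ((n:ℝ) * π / L * x)) / L) ^ 2) ∧
    ∑' n : ℤ, ((∫ x in (0:ℝ)..L, f x * Real.cos ((n:ℝ) * π / L * x)) / L) ^ 2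
      = (1/L) * ∫ x in (0:ℝ)..L, (f x)^2 := by
  have h2L : (0:ℝ) < 2*L := by linarith
  have hg : Continuous (evext L f) := evext_cont hf
  have hgT : evext L f 0 = evext L f (2*L) := by
    simp only [evext]
    rw [if_pos hL.le, if_neg (by simp; linarith), show 2*L - 2*L = 0 by ring]
  obtain ⟨hs, hsum⟩ := parseval_aux h2L (evext L f) hg hgT
  have hnorm : ∀ n : ℤ, ‖fourierCoeffOn h2L (evext L f) n‖^2
      = ((∫ x in (0:ℝ)..L, f x * Real.cos ((n:ℝ) * π / L * x)) / L) ^ 2 := by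
    intro n
    rw [evencoeff L hL f hf n h2L, Complex.norm_real, Real.norm_eq_abs, _root_.sq_abs]
  have hR : ∫ x in (0:ℝ)..(2*L), ‖evext L f x‖^2 = 2 * ∫ x in (0:ℝ)..L, (f x)^2 := by
    have hptw : ∀ x : ℝ, ‖evext L f x‖^2 = (if x ≤ L then f x else f (2*L - x))^2 := by
      intro x; rw [evext, Complex.norm_real, Real.norm_eq_abs, _root_.sq_abs]
    have hcongr : ∫ x in (0:ℝ)..(2*L), ‖evext L f x‖^2
        = ∫ x in (0:ℝ)..(2*L), (if x ≤ L then f x else f (2*L - x))^2 := by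
      apply intervalIntegral.integral_congr; intro x _; exact hptw x
    have hcont2 : Continuous fun x : ℝ => (if x ≤ L then f x else f (2*L - x))^2 := by
      apply Continuous.pow
      apply Continuous.if_le hf (hf.comp (by continuity)) continuous_id continuous_const
      intro x hx
      simp only [id] at hx
      rw [hx]
      show f L = f (2*L - L)
      rw [show 2*L - L = L by ring]
    have hspl : ∫ x in (0:ℝ)..(2*L), (if x ≤ L then f x else f (2*L - x))^2
        = (∫ x in (0:ℝ)..L, (if x ≤ L then f x else f (2*L - x))^2)
          + ∫ x in L..(2*L), (if x ≤ L then f x else f (2*L - x))^2 :=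
      (intervalIntegral.integral_add_adjacent_intervals
        (hcont2.intervalIntegrable _ _) (hcont2.intervalIntegrable _ _)).symm
    have hp1 : ∫ x in (0:ℝ)..L, (if x ≤ L then f x else f (2*L - x))^2
        = ∫ x in (0:ℝ)..L, (f x)^2 := by
      apply intervalIntegral.integral_congr
      intro x hx
      rw [Set.uIcc_of_le hL.le] at hx
      show (if x ≤ L then f x else f (2*L - x))^2 = (f x)^2
      rw [if_pos hx.2]
    have hp2 : ∫ x in L..(2*L), (if x ≤ L then f x else f (2*L - x))^2
        = ∫ x in (0:ℝ)..L, (f x)^2 := by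
      have he : ∫ x in L..(2*L), (if x ≤ L then f x else f (2*L - x))^2
          = ∫ x in L..(2*L), (f (2*L - x))^2 := by
        apply intervalIntegral.integral_congr
        intro x hx
        rw [Set.uIcc_of_le (by linarith : L ≤ 2*L)] at hx
        show (if x ≤ L then f x else f (2*L - x))^2 = (f (2*L - x))^2
        rcases le_or_gt x L with h | h
        · have hxL : x = L := le_antisymm h hx.1
          rw [if_pos h, hxL, show 2*L - L = L by ring]
        · rw [if_neg (not_le.mpr h)]
      have h := intervalIntegral.integral_comp_sub_left (a := L) (b := 2*L)
        (fun u : ℝ => (f u)^2) (2*L)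
      rw [show 2*L - 2*L = (0:ℝ) by ring, show 2*L - L = L by ring] at h
      rw [he, h]
    rw [hcongr, hspl, hp1, hp2]; ring
  constructor
  · exact hs.congr (fun n => hnorm n)
  · calc ∑' n : ℤ, ((∫ x in (0:ℝ)..L, f x * Real.cos ((n:ℝ) * π / L * x)) / L) ^ 2
        = ∑' n : ℤ, ‖fourierCoeffOn h2L (evext L f) n‖^2 := by
          apply tsum_congr; intro n; rw [hnorm n]
      _ = (1/(2*L)) * ∫ x in (0:ℝ)..(2*L), ‖evext L f x‖^2 := hsum
      _ = (1/L) * ∫ x in (0:ℝ)..L, (f x)^2 := by rw [hR]; field_simp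

set_option maxHeartbeats 1000000 in
/-- Strict negativity of `A = -∂ₓ⁴ + ν ∂ₓ²` on zero-mean functions with Neumann boundary
conditions in the stable case `ν > -π²/L²`. -/
theorem stmt15 (L : ℝ) (hL : 0 < L) (ν : ℝ) (hν : -π^2 / L^2 < ν) :
    ∃ α > (0:ℝ),
      ∀ v : ℝ → ℝ, ContDiff ℝ 4 v → (∫ x in (0:ℝ)..L, v x) = 0 →
        deriv v 0 = 0 → deriv v L = 0 →
        deriv (deriv (deriv v)) 0 = 0 → deriv (deriv (deriv v)) L = 0 →
        (∫ x in (0:ℝ)..L,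
            v x * (-(deriv (deriv (deriv (deriv v))) x) + ν * deriv (deriv v) x))
          ≤ -α * ∫ x in (0:ℝ)..L, (v x)^2 := by
  have hπ : 0 < π := Real.pi_pos
  set t : ℝ := π^2 / L^2 with hts
  have ht : 0 < t := by positivity
  set β : ℝ := max (-ν) 0 with hβs
  have hβ0 : 0 ≤ β := le_max_right _ _
  have hβν : -ν ≤ β := le_max_left _ _
  have hνt : -t < ν := by rw [hts, ← neg_div]; exact hν
  have hβt : β < t := max_lt (by linarith) ht
  refine ⟨t * (t - β), mul_pos ht (by linarith), ?_⟩
  intro v hv hzero hb10 hb1L hb30 hb3L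
  -- derivative bookkeeping
  have step : ∀ (n : ℕ) (f : ℝ → ℝ), ContDiff ℝ (n+1 : ℕ) f →
      Differentiable ℝ f ∧ ContDiff ℝ (n : ℕ) (deriv f) := by
    intro n f hf
    rw [show ((n+1 : ℕ) : WithTop ℕ∞) = (n : WithTop ℕ∞) + 1 by push_cast; ring] at hf
    rw [contDiff_succ_iff_deriv] at hf
    exact ⟨hf.1, hf.2.2⟩
  set v1 := deriv v with hv1
  set v2 := deriv v1 with hv2
  set v3 := deriv v2 with hv3
  set v4 := deriv v3 with hv4
  have h1 := step 3 v (by exact_mod_cast hv)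
  have h2 := step 2 v1 (by exact_mod_cast h1.2)
  have h3 := step 1 v2 (by exact_mod_cast h2.2)
  have h4 := step 0 v3 (by exact_mod_cast h3.2)
  have hc0 : Continuous v := hv.continuous
  have hc1 : Continuous v1 := h1.2.continuous
  have hc2 : Continuous v2 := h2.2.continuous
  have hc3 : Continuous v3 := h3.2.continuous
  have hc4 : Continuous v4 := h4.2.continuous
  have hd1 : ∀ x : ℝ, HasDerivAt v (v1 x) x := fun x => (h1.1 x).hasDerivAt
  have hd2 : ∀ x : ℝ, HasDerivAt v1 (v2 x) x := fun x => (h2.1 x).hasDerivAt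
  have hd3 : ∀ x : ℝ, HasDerivAt v2 (v3 x) x := fun x => (h3.1 x).hasDerivAt
  have hd4 : ∀ x : ℝ, HasDerivAt v3 (v4 x) x := fun x => (h4.1 x).hasDerivAt
  -- integration by parts for the quadratic form
  have hIvv4 : ∫ x in (0:ℝ)..L, v x * v4 x = ∫ x in (0:ℝ)..L, (v2 x)^2 := by
    have e1 : ∫ x in (0:ℝ)..L, v x * v4 x
        = v L * v3 L - v 0 * v3 0 - ∫ x in (0:ℝ)..L, v1 x * v3 x :=
      intervalIntegral.integral_mul_deriv_eq_deriv_mul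
        (fun x _ => hd1 x) (fun x _ => hd4 x)
        (hc1.intervalIntegrable _ _) (hc4.intervalIntegrable _ _)
    have e2 : ∫ x in (0:ℝ)..L, v1 x * v3 x
        = v1 L * v2 L - v1 0 * v2 0 - ∫ x in (0:ℝ)..L, v2 x * v2 x :=
      intervalIntegral.integral_mul_deriv_eq_deriv_mul
        (fun x _ => hd2 x) (fun x _ => hd3 x)
        (hc2.intervalIntegrable _ _) (hc3.intervalIntegrable _ _)
    have e3 : ∫ x in (0:ℝ)..L, v2 x * v2 x = ∫ x in (0:ℝ)..L, (v2 x)^2 := by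
      apply intervalIntegral.integral_congr
      intro x _
      ring
    rw [e1, e2, e3, hb30, hb3L, hb10, hb1L]
    ring
  have hIvv2 : ∫ x in (0:ℝ)..L, v x * v2 x = -∫ x in (0:ℝ)..L, (v1 x)^2 := by
    have e1 : ∫ x in (0:ℝ)..L, v x * v2 x
        = v L * v1 L - v 0 * v1 0 - ∫ x in (0:ℝ)..L, v1 x * v1 x :=
      intervalIntegral.integral_mul_deriv_eq_deriv_mul
        (fun x _ => hd1 x) (fun x _ => hd2 x)
        (hc1.intervalIntegrable _ _) (hc2.intervalIntegrable _ _)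
    have e3 : ∫ x in (0:ℝ)..L, v1 x * v1 x = ∫ x in (0:ℝ)..L, (v1 x)^2 := by
      apply intervalIntegral.integral_congr
      intro x _
      ring
    rw [e1, e3, hb10, hb1L]
    ring
  have hMain : ∫ x in (0:ℝ)..L, v x * (-(v4 x) + ν * v2 x)
      = -(∫ x in (0:ℝ)..L, (v2 x)^2) - ν * ∫ x in (0:ℝ)..L, (v1 x)^2 := by
    have e0 : ∫ x in (0:ℝ)..L, v x * (-(v4 x) + ν * v2 x)
        = ∫ x in (0:ℝ)..L, (-(v x * v4 x) + ν * (v x * v2 x)) := by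
      apply intervalIntegral.integral_congr
      intro x _
      ring
    rw [e0, intervalIntegral.integral_add (f := fun x => -(v x * v4 x)) (g := fun x => ν * (v x * v2 x)) (((hc0.mul hc4).neg).intervalIntegrable _ _)
      ((continuous_const.mul (hc0.mul hc2)).intervalIntegrable _ _),
      intervalIntegral.integral_neg, intervalIntegral.integral_const_mul, hIvv4, hIvv2]
    ring
  -- coefficient integration by parts
  have hC : ∀ n : ℤ, (∫ x in (0:ℝ)..L, v2 x * Real.cos ((n:ℝ) * π / L * x))
      = -((n:ℝ) * π / L)^2 * ∫ x in (0:ℝ)..L, v x * Real.cos ((n:ℝ) * π / L * x) := by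
    intro n
    set k : ℝ := (n:ℝ) * π / L with hk
    have hsinL : Real.sin (k * L) = 0 := by
      rw [show k * L = (n:ℝ) * π by rw [hk]; field_simp]
      exact Real.sin_int_mul_pi n
    have hkx : ∀ x : ℝ, HasDerivAt (fun y : ℝ => k * y) k x := by
      intro x
      simpa using (hasDerivAt_id x).const_mul k
    have hdcos : ∀ x : ℝ, HasDerivAt (fun y => Real.cos (k * y)) (-Real.sin (k * x) * k) x :=
      fun x => (hkx x).cos
    have hdsin : ∀ x : ℝ, HasDerivAt (fun y => Real.sin (k * y)) (Real.cos (k * x) * k) x :=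
      fun x => (hkx x).sin
    have e1 : ∫ x in (0:ℝ)..L, Real.cos (k * x) * v2 x
        = Real.cos (k * L) * v1 L - Real.cos (k * 0) * v1 0
          - ∫ x in (0:ℝ)..L, (-Real.sin (k * x) * k) * v1 x :=
      intervalIntegral.integral_mul_deriv_eq_deriv_mul
        (fun x _ => hdcos x) (fun x _ => hd2 x)
        (((Real.continuous_sin.comp (continuous_const.mul continuous_id)).neg.mul
          continuous_const).intervalIntegrable _ _)
        (hc2.intervalIntegrable _ _)
    have e2 : ∫ x in (0:ℝ)..L, Real.sin (k * x) * v1 x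
        = Real.sin (k * L) * v L - Real.sin (k * 0) * v 0
          - ∫ x in (0:ℝ)..L, (Real.cos (k * x) * k) * v x :=
      intervalIntegral.integral_mul_deriv_eq_deriv_mul
        (fun x _ => hdsin x) (fun x _ => hd1 x)
        (((Real.continuous_cos.comp (continuous_const.mul continuous_id)).mul
          continuous_const).intervalIntegrable _ _)
        (hc1.intervalIntegrable _ _)
    have e1' : ∫ x in (0:ℝ)..L, (-Real.sin (k * x) * k) * v1 x
        = -k * ∫ x in (0:ℝ)..L, Real.sin (k * x) * v1 x := by
      rw [← intervalIntegral.integral_const_mul]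
      apply intervalIntegral.integral_congr
      intro x _
      ring
    have e2' : ∫ x in (0:ℝ)..L, (Real.cos (k * x) * k) * v x
        = k * ∫ x in (0:ℝ)..L, Real.cos (k * x) * v x := by
      rw [← intervalIntegral.integral_const_mul]
      apply intervalIntegral.integral_congr
      intro x _
      ring
    have eC : ∫ x in (0:ℝ)..L, v2 x * Real.cos (k * x)
        = ∫ x in (0:ℝ)..L, Real.cos (k * x) * v2 x := by
      apply intervalIntegral.integral_congr
      intro x _
      ring
    have eA : ∫ x in (0:ℝ)..L, v x * Real.cos (k * x)
        = ∫ x in (0:ℝ)..L, Real.cos (k * x) * v x := by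
      apply intervalIntegral.integral_congr
      intro x _
      ring
    rw [eC, eA, e1, e1', e2, e2', hsinL, hb10, hb1L]
    simp only [mul_zero, Real.sin_zero, zero_mul]
    ring
  -- Parseval for v and v2
  obtain ⟨hS0, hT0⟩ := even_parseval L hL v hc0
  obtain ⟨hS2, hT2⟩ := even_parseval L hL v2 hc2
  have hA0 : (∫ x in (0:ℝ)..L, v x * Real.cos (((0:ℤ):ℝ) * π / L * x)) = 0 := by
    have e : (∫ x in (0:ℝ)..L, v x * Real.cos (((0:ℤ):ℝ) * π / L * x)) = ∫ x in (0:ℝ)..L, v x := by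
      apply intervalIntegral.integral_congr
      intro x _
      norm_num
    rw [e, hzero]
  have key : ∀ n : ℤ,
      t^2 * ((∫ x in (0:ℝ)..L, v x * Real.cos ((n:ℝ) * π / L * x)) / L) ^ 2
        ≤ ((∫ x in (0:ℝ)..L, v2 x * Real.cos ((n:ℝ) * π / L * x)) / L) ^ 2 := by
    intro n
    rw [hC n]
    rcases eq_or_ne n 0 with rfl | hn
    · rw [hA0]
      norm_num
    · set A : ℝ := ∫ x in (0:ℝ)..L, v x * Real.cos ((n:ℝ) * π / L * x)
      have hn1 : (1:ℝ) ≤ (n:ℝ)^2 := by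
        have h' : (1:ℤ) ≤ n^2 := by rcases lt_or_gt_of_ne hn with h|h <;> nlinarith
        exact_mod_cast h'
      have hkt : t ≤ ((n:ℝ) * π / L)^2 := by
        rw [hts]
        rw [div_pow, mul_pow]
        rw [div_le_div_iff₀ (by positivity) (by positivity)]
        nlinarith [mul_le_mul_of_nonneg_right hn1 (by positivity : (0:ℝ) ≤ π^2 * L^2)]
      have hexp : ((-((n:ℝ) * π / L)^2 * A) / L)^2 = (((n:ℝ) * π / L)^2)^2 * (A/L)^2 := by
        ring
      rw [hexp]
      nlinarith [sq_nonneg (A/L), mul_self_le_mul_self ht.le hkt]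
  have hsum_le : t^2 * ((1/L) * ∫ x in (0:ℝ)..L, (v x)^2)
      ≤ (1/L) * ∫ x in (0:ℝ)..L, (v2 x)^2 := by
    rw [← hT0, ← hT2, ← tsum_mul_left]
    exact Summable.tsum_le_tsum key (hS0.mul_left _) hS2
  have hspec : t^2 * (∫ x in (0:ℝ)..L, (v x)^2) ≤ ∫ x in (0:ℝ)..L, (v2 x)^2 := by
    have h := mul_le_mul_of_nonneg_left hsum_le hL.le
    rw [show L * (t^2 * ((1/L) * ∫ x in (0:ℝ)..L, (v x)^2))
        = t^2 * (∫ x in (0:ℝ)..L, (v x)^2) by field_simp; try ring,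
      show L * ((1/L) * ∫ x in (0:ℝ)..L, (v2 x)^2) = ∫ x in (0:ℝ)..L, (v2 x)^2 by
        field_simp] at h
    exact h
  -- AM-GM bound for the middle term
  have ham : 2 * t * (∫ x in (0:ℝ)..L, (v1 x)^2)
      ≤ t^2 * (∫ x in (0:ℝ)..L, (v x)^2) + ∫ x in (0:ℝ)..L, (v2 x)^2 := by
    have e0 : ∫ x in (0:ℝ)..L, (v1 x)^2 = -∫ x in (0:ℝ)..L, v x * v2 x := by
      rw [hIvv2]; ring
    have int1 : IntervalIntegrable (fun x : ℝ => (2 * t) * (-(v x * v2 x))) volume 0 L :=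
      (continuous_const.mul ((hc0.mul hc2).neg)).intervalIntegrable _ _
    have int2 : IntervalIntegrable (fun x : ℝ => t^2 * (v x)^2 + (v2 x)^2) volume 0 L :=
      ((continuous_const.mul (hc0.pow 2)).add (hc2.pow 2)).intervalIntegrable _ _
    have hle : ∀ x ∈ Icc (0:ℝ) L, (2 * t) * (-(v x * v2 x)) ≤ t^2 * (v x)^2 + (v2 x)^2 :=
      fun x _ => by nlinarith [sq_nonneg (t * v x + v2 x)]
    have hmono := intervalIntegral.integral_mono_on (μ := volume) hL.le int1 int2 hle
    rw [intervalIntegral.integral_const_mul, intervalIntegral.integral_add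
      (f := fun x => t^2 * (v x)^2) (g := fun x => (v2 x)^2) ((continuous_const.mul (hc0.pow 2)).intervalIntegrable _ _)
      ((hc2.pow 2).intervalIntegrable _ _), intervalIntegral.integral_neg,
      intervalIntegral.integral_const_mul] at hmono
    rw [e0]
    linarith [hmono]
  have hI1nn : 0 ≤ ∫ x in (0:ℝ)..L, (v1 x)^2 :=
    intervalIntegral.integral_nonneg hL.le (fun x _ => sq_nonneg _)
  have hI0nn : 0 ≤ ∫ x in (0:ℝ)..L, (v x)^2 :=
    intervalIntegral.integral_nonneg hL.le (fun x _ => sq_nonneg _)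
  rw [hMain]
  nlinarith [mul_nonneg (by linarith : (0:ℝ) ≤ β + ν) hI1nn,
    mul_nonneg hβ0 (by linarith :
      (0:ℝ) ≤ t^2 * (∫ x in (0:ℝ)..L, (v x)^2) + (∫ x in (0:ℝ)..L, (v2 x)^2)
        - 2 * t * ∫ x in (0:ℝ)..L, (v1 x)^2),
    mul_nonneg (by linarith : (0:ℝ) ≤ 2*t - β) (by linarith :
      (0:ℝ) ≤ (∫ x in (0:ℝ)..L, (v2 x)^2) - t^2 * ∫ x in (0:ℝ)..L, (v x)^2), ht]
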